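/- Let Ω ⊆ ℝ^n be closed convex, f : ℝ^n → ℝ differentiable, s ∈ {1,...,n-1}, and C_s = {x : ‖x‖₀ ≤ s}. Suppose x* ∈ C_s ∩ Ω with ‖x*‖₀ < s, and for some t̂ > 0, x* is a minimizer of ‖x - (x* - t̂∇f(x*))‖² over C_s ∩ Ω. Assume additionally that whenever v_T ∈ N_{Ω_T}(x*_T) for all T ⊇ supp(x*) with |T| = s, one has v ∈ N_Ω(x*). Then -∇f(x*) ∈ N_Ω(x*), and consequently x* = proj_Ω(x* - t∇f(x*)) for all t ≥ 0. -/

import Mathlib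

open scoped RealInnerProductSpace

noncomputable section

/-- Euclidean space ℝ^n. -/
abbrev E (n : ℕ) := EuclideanSpace ℝ (Fin n)

/-- Support of a vector, as a finset. -/
def spt {n : ℕ} (x : E n) : Finset (Fin n) := Finset.univ.filter (fun i => x i ≠ 0)

/-- A set is symmetric if it is invariant under coordinate permutations. -/
def IsSymmSet {n : ℕ} (X : Set (E n)) : Prop :=
  ∀ x ∈ X, ∀ σ : Equiv.Perm (Fin n), (WithLp.toLp 2 (fun i => x (σ i)) : E n) ∈ X

/-- A set is sign-free symmetric if it is symmetric and invariant under sign flips. -/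
def IsSignFreeSymmSet {n : ℕ} (X : Set (E n)) : Prop :=
  IsSymmSet X ∧ ∀ x ∈ X, ∀ ε : Fin n → ℝ, (∀ i, ε i = 1 ∨ ε i = -1) →
    (WithLp.toLp 2 (fun i => ε i * x i) : E n) ∈ X

/-- A set is nonnegative symmetric if it is symmetric and contained in ℝ^n_+. -/
def IsNonnegSymmSet {n : ℕ} (X : Set (E n)) : Prop :=
  IsSymmSet X ∧ ∀ x ∈ X, ∀ i, 0 ≤ x i

/-- `y` is a (Euclidean) projection of `x` onto `X`. -/
def IsProj {n : ℕ} (X : Set (E n)) (x y : E n) : Prop :=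
  y ∈ X ∧ ∀ z ∈ X, ‖y - x‖ ≤ ‖z - x‖

/-- The set of s-sparse vectors. -/
def Cs (n s : ℕ) : Set (E n) := {x | (spt x).card ≤ s}

private lemma aux_limit (A B : ℝ) (hA : 0 ≤ A)
    (h : ∀ l : ℝ, 0 < l → l ≤ 1 → 0 ≤ l * A + B) : 0 ≤ B := by
  by_contra hB
  push_neg at hB
  rcases eq_or_lt_of_le hA with hA0 | hA0
  · have := h 1 one_pos le_rfl
    nlinarith
  · set l := min 1 (-B / (2 * A)) with hl
    have hl1 : l ≤ 1 := min_le_left _ _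
    have hl0 : 0 < l := lt_min one_pos (div_pos (by linarith) (by positivity))
    have h2 : l ≤ -B / (2 * A) := min_le_right _ _
    have h3 : l * A ≤ -B / 2 := by
      calc l * A ≤ (-B / (2 * A)) * A := mul_le_mul_of_nonneg_right h2 (le_of_lt hA0)
        _ = -B / 2 := by field_simp
    have := h l hl0 hl1
    nlinarith

theorem stmt14 {n s : ℕ} (Ω : Set (E n)) (hcl : IsClosed Ω) (hconv : Convex ℝ Ω)
    (f : E n → ℝ) (g : E n → E n) (hgrad : ∀ x, HasGradientAt f (g x) x)
    (hs1 : 1 ≤ s) (hs2 : s < n)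
    (xs : E n) (hxs : xs ∈ Cs n s ∩ Ω) (hcard : (spt xs).card < s)
    (th : ℝ) (hth : 0 < th)
    (hmin : ∀ z ∈ Cs n s ∩ Ω,
      ‖xs - (xs - th • g xs)‖ ≤ ‖z - (xs - th • g xs)‖)
    (hnc : ∀ v : E n,
      (∀ T : Finset (Fin n), spt xs ⊆ T → T.card = s →
        ∀ y ∈ Ω, (∀ i ∉ T, y i = 0) → ⟪v, y - xs⟫ ≤ 0) →
      ∀ y ∈ Ω, ⟪v, y - xs⟫ ≤ 0) :
    (∀ y ∈ Ω, ⟪-(g xs), y - xs⟫ ≤ 0) ∧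
    (∀ t : ℝ, 0 ≤ t → ∀ y ∈ Ω,
      ‖xs - (xs - t • g xs)‖ ≤ ‖y - (xs - t • g xs)‖) := by
  have key : ∀ y ∈ Ω, ⟪-(g xs), y - xs⟫ ≤ 0 := by
    apply hnc
    intro T hT hTcard y hy hysupp
    -- for small l, z = xs + l • (y - xs) is in Cs n s ∩ Ω
    have hzmem : ∀ l : ℝ, 0 < l → l ≤ 1 → xs + l • (y - xs) ∈ Cs n s ∩ Ω := by
      intro l hl0 hl1
      constructor
      · -- sparse: supported in T
        have hsub : spt (xs + l • (y - xs)) ⊆ T := by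
          intro i hi
          simp only [spt, Finset.mem_filter] at hi
          by_contra hiT
          apply hi.2
          have hx0 : xs i = 0 := by
            by_contra hx
            exact hiT (hT (by simp [spt, hx]))
          have hy0 : y i = 0 := hysupp i hiT
          simp [hx0, hy0]
        exact le_trans (Finset.card_le_card hsub) (le_of_eq hTcard)
      · have : xs + l • (y - xs) = (1 - l) • xs + l • y := by
          module
        rw [this]
        exact hconv hxs.2 hy (by linarith) (le_of_lt hl0) (by ring)
    -- use hmin on z
    have hineq : ∀ l : ℝ, 0 < l → l ≤ 1 →
        0 ≤ l * ‖y - xs‖ ^ 2 + 2 * th * ⟪y - xs, g xs⟫ := by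
      intro l hl0 hl1
      have h1 := hmin _ (hzmem l hl0 hl1)
      have e1 : xs - (xs - th • g xs) = th • g xs := by abel
      have e2 : xs + l • (y - xs) - (xs - th • g xs) = l • (y - xs) + th • g xs := by
        abel
      rw [e1, e2] at h1
      have h2 : ‖th • g xs‖ ^ 2 ≤ ‖l • (y - xs) + th • g xs‖ ^ 2 := by
        have := norm_nonneg (th • g xs)
        nlinarith
      rw [norm_add_sq_real] at h2
      rw [real_inner_smul_left, real_inner_smul_right] at h2
      have hns : ‖l • (y - xs)‖ = l * ‖y - xs‖ := by
        rw [norm_smul, Real.norm_eq_abs, abs_of_pos hl0]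
      rw [hns] at h2
      have h3 : 0 ≤ l ^ 2 * ‖y - xs‖ ^ 2 + 2 * (l * (th * ⟪y - xs, g xs⟫)) := by
        nlinarith
      have := mul_pos hl0 hl0
      nlinarith
    have hB : 0 ≤ 2 * th * ⟪y - xs, g xs⟫ :=
      aux_limit (‖y - xs‖ ^ 2) _ (by positivity) hineq
    have hgi : 0 ≤ ⟪y - xs, g xs⟫ := by nlinarith
    rw [inner_neg_left, real_inner_comm]
    linarith
  refine ⟨key, ?_⟩
  intro t ht y hy
  have hgi : 0 ≤ ⟪y - xs, g xs⟫ := by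
    have := key y hy
    rw [inner_neg_left, real_inner_comm] at this
    linarith
  have e1 : xs - (xs - t • g xs) = t • g xs := by abel
  have e2 : y - (xs - t • g xs) = (y - xs) + t • g xs := by abel
  rw [e1, e2]
  have h2 : ‖t • g xs‖ ^ 2 ≤ ‖(y - xs) + t • g xs‖ ^ 2 := by
    rw [norm_add_sq_real, real_inner_smul_right]
    nlinarith [sq_nonneg ‖y - xs‖]
  nlinarith [norm_nonneg (t • g xs), norm_nonneg ((y - xs) + t • g xs)]
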